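/- Let X : [0,T) × ℝ → ℝ² be a smooth family of closed curves evolving by the area-preserving mean-curvature flow, i.e. whose normal velocity satisfies ∂ₜX(t,u) · n(t,u) = −κ(t,u) + (1/L(t)) ∫₀¹ κ(t,w) |∂ᵤX(t,w)| dw for all (t,u). Then the length satisfies dL/dt (t) = −∫₀¹ κ(t,u)² |∂ᵤX(t,u)| du + (1/L(t)) (∫₀¹ κ(t,u) |∂ᵤX(t,u)| du)², and this quantity is ≤ 0 for every t; consequently L is non-increasing on [0,T). Moreover dL/dt (t) = 0 holds if and only if u ↦ κ(t,u) is constant. -/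

import Mathlib

open Set MeasureTheory Real Filter
open scoped RealInnerProductSpace

noncomputable section

abbrev E2 : Type := EuclideanSpace ℝ (Fin 2)

def perp (p : E2) : E2 := (WithLp.equiv 2 (Fin 2 → ℝ)).symm ![p 1, -(p 0)]

def unitNormal (Y : ℝ → E2) (u : ℝ) : E2 := ‖deriv Y u‖⁻¹ • perp (deriv Y u)

def curvature (Y : ℝ → E2) (u : ℝ) : ℝ :=
  -(‖deriv Y u‖⁻¹ * ⟪deriv (fun v => ‖deriv Y v‖⁻¹ • deriv Y v) u, unitNormal Y u⟫)

def curveLength (Y : ℝ → E2) : ℝ := ∫ u in (0:ℝ)..1, ‖deriv Y u‖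

def enclosedArea (Y : ℝ → E2) : ℝ := (1/2) * ∫ u in (0:ℝ)..1, ⟪Y u, perp (deriv Y u)⟫

def IsSmoothClosedCurve (Y : ℝ → E2) : Prop :=
  ContDiff ℝ 2 Y ∧ (∀ u, Y (u + 1) = Y u) ∧ ∀ u, deriv Y u ≠ 0

def IsSmoothClosedFamily (T : ℝ) (X : ℝ → ℝ → E2) : Prop :=
  ContDiffOn ℝ 2 (fun p : ℝ × ℝ => X p.1 p.2) (Ico 0 T ×ˢ univ) ∧
  ∀ t ∈ Ico 0 T, IsSmoothClosedCurve (X t)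

open Topology

lemma perp_apply_zero (p : E2) : perp p 0 = p 1 := by
  simp [perp, WithLp.equiv_symm_apply, PiLp.toLp_apply]

lemma perp_apply_one (p : E2) : perp p 1 = -(p 0) := by
  simp [perp, WithLp.equiv_symm_apply, PiLp.toLp_apply]

lemma inner_E2 (x y : E2) : ⟪x, y⟫ = x 0 * y 0 + x 1 * y 1 := by
  simp [PiLp.inner_apply, Fin.sum_univ_two, RCLike.inner_apply, mul_comm]

lemma normsq_E2 (x : E2) : ‖x‖ ^ 2 = x 0 ^ 2 + x 1 ^ 2 := by
  rw [← real_inner_self_eq_norm_sq, inner_E2]; ring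

def perpL : E2 →ₗ[ℝ] E2 where
  toFun := perp
  map_add' x y := by
    refine PiLp.ext fun i => ?_
    fin_cases i <;>
      simp [perp_apply_zero, perp_apply_one, PiLp.add_apply] <;> ring
  map_smul' c x := by
    refine PiLp.ext fun i => ?_
    fin_cases i <;>
      simp [perp_apply_zero, perp_apply_one, PiLp.smul_apply, smul_eq_mul] <;> ring

lemma continuous_perp : Continuous perp := perpL.continuous_of_finiteDimensional

lemma orth_decomp {q x : E2} (hq : q ≠ 0) (h : ⟪x, q⟫ = 0) :
    x = (‖q‖⁻¹ * ⟪x, perp q⟫) • (‖q‖⁻¹ • perp q) := by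
  have hn : ‖q‖ ≠ 0 := norm_ne_zero_iff.2 hq
  have hsq : q 0 ^ 2 + q 1 ^ 2 ≠ 0 := by
    rw [← normsq_E2]; positivity
  rw [inner_E2] at h
  rw [smul_smul]
  have hc : ‖q‖⁻¹ * ⟪x, perp q⟫ * ‖q‖⁻¹ = (q 0 ^ 2 + q 1 ^ 2)⁻¹ * ⟪x, perp q⟫ := by
    rw [← normsq_E2, sq, mul_inv]
    ring
  rw [hc, inner_E2, perp_apply_zero, perp_apply_one]
  refine PiLp.ext fun i => ?_
  fin_cases i <;>
    simp only [Fin.zero_eta, Fin.mk_one, Fin.isValue, PiLp.smul_apply, perp_apply_zero,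
      perp_apply_one, smul_eq_mul] <;>
    rw [inv_mul_eq_div, div_mul_eq_mul_div, eq_div_iff hsq]
  · linear_combination q 0 * h
  · linear_combination q 1 * h

lemma hasDerivWithinAt_norm_comp {g : ℝ → E2} {g' : E2} {s : Set ℝ} {x : ℝ}
    (h : HasDerivWithinAt g g' s x) (h0 : g x ≠ 0) :
    HasDerivWithinAt (fun y => ‖g y‖) (⟪g', g x⟫ / ‖g x‖) s x := by
  have hq : HasDerivWithinAt (fun y => ⟪g y, g y⟫) (⟪g x, g'⟫ + ⟪g', g x⟫) s x :=
    h.inner ℝ h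
  have hpos : (0:ℝ) < ⟪g x, g x⟫ := by
    rw [real_inner_self_eq_norm_sq]
    exact pow_pos (norm_pos_iff.2 h0) 2
  have hs := (Real.hasDerivAt_sqrt hpos.ne').comp_hasDerivWithinAt x hq
  have hnorm : ∀ y : E2, Real.sqrt ⟪y, y⟫ = ‖y‖ := fun y => by
    rw [real_inner_self_eq_norm_sq, Real.sqrt_sq (norm_nonneg _)]
  have heq : (fun y => Real.sqrt ⟪g y, g y⟫) = fun y => ‖g y‖ := funext fun y => hnorm (g y)
  rw [Function.comp_def, heq] at hs
  refine hs.congr_deriv ?_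
  rw [hnorm, real_inner_comm (g x) g']
  have hn : ‖g x‖ ≠ 0 := norm_ne_zero_iff.2 h0
  field_simp
  ring

lemma hasDerivWithinAt_intervalIntegral
    {φ ψ : ℝ → ℝ → ℝ} {J : Set ℝ} {t : ℝ}
    (hJ : Convex ℝ J) (ht : t ∈ J)
    (hd : ∀ s ∈ J, ∀ u ∈ Icc (0:ℝ) 1, HasDerivWithinAt (fun σ => φ σ u) (ψ s u) J s)
    (hui : ∀ ε > 0, ∃ δ > 0, ∀ s ∈ J, |s - t| ≤ δ → ∀ u ∈ Icc (0:ℝ) 1, |ψ s u - ψ t u| ≤ ε)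
    (hint : ∀ s ∈ J, IntervalIntegrable (φ s) volume 0 1)
    (hψ : IntervalIntegrable (ψ t) volume 0 1) :
    HasDerivWithinAt (fun s => ∫ u in (0:ℝ)..1, φ s u) (∫ u in (0:ℝ)..1, ψ t u) J t := by
  rw [hasDerivWithinAt_iff_isLittleO, Asymptotics.isLittleO_iff]
  intro ε hε
  obtain ⟨δ, hδ, hδ'⟩ := hui ε hε
  have hmem : Metric.closedBall t δ ∩ J ∈ 𝓝[J] t :=
    Filter.inter_mem (mem_nhdsWithin_of_mem_nhds (Metric.closedBall_mem_nhds t hδ))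
      self_mem_nhdsWithin
  filter_upwards [hmem] with s hs
  set K := Metric.closedBall t δ ∩ J with hK
  have hKconv : Convex ℝ K := (convex_closedBall t δ).inter hJ
  have htK : t ∈ K := ⟨Metric.mem_closedBall_self hδ.le, ht⟩
  have key : ∀ u ∈ Icc (0:ℝ) 1, ‖φ s u - φ t u - (s - t) * ψ t u‖ ≤ ε * |s - t| := by
    intro u hu
    have h1 : ∀ σ ∈ K, HasDerivWithinAt (fun σ' => φ σ' u - σ' * ψ t u) (ψ σ u - ψ t u) K σ :=
      fun σ hσ => by
        exact (((hd σ hσ.2 u hu).mono inter_subset_right).sub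
          ((hasDerivWithinAt_id σ K).mul_const (ψ t u))).congr_deriv (by ring)
    have h2 : ∀ σ ∈ K, ‖ψ σ u - ψ t u‖ ≤ ε := fun σ hσ => by
      rw [Real.norm_eq_abs]
      exact hδ' σ hσ.2 (by simpa [Real.dist_eq] using hσ.1) u hu
    have hmvt := hKconv.norm_image_sub_le_of_norm_hasDerivWithin_le h1 h2 htK hs
    calc ‖φ s u - φ t u - (s - t) * ψ t u‖
        = ‖(φ s u - s * ψ t u) - (φ t u - t * ψ t u)‖ := by ring_nf
      _ ≤ ε * ‖s - t‖ := hmvt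
      _ = ε * |s - t| := by rw [Real.norm_eq_abs]
  have hsub : (∫ u in (0:ℝ)..1, φ s u) - (∫ u in (0:ℝ)..1, φ t u)
      - (s - t) • (∫ u in (0:ℝ)..1, ψ t u)
      = ∫ u in (0:ℝ)..1, (φ s u - φ t u - (s - t) * ψ t u) := by
    rw [smul_eq_mul, ← intervalIntegral.integral_const_mul,
      ← intervalIntegral.integral_sub (hint s hs.2) (hint t ht),
      ← intervalIntegral.integral_sub ((hint s hs.2).sub (hint t ht)) (hψ.const_mul _)]
  rw [Real.norm_eq_abs (s - t), hsub]
  have := intervalIntegral.norm_integral_le_of_norm_le_const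
    (C := ε * |s - t|) (f := fun u => φ s u - φ t u - (s - t) * ψ t u) (a := 0) (b := 1)
    (fun u hu => key u (Ioc_subset_Icc_self
      (by rwa [uIoc_of_le (by norm_num : (0:ℝ) ≤ 1)] at hu)))
  simpa using this

lemma eqOn_zero_of_integral_zero {f : ℝ → ℝ} (hf : Continuous f) (h0 : ∀ u, 0 ≤ f u)
    (hz : (∫ u in (0:ℝ)..1, f u) = 0) : ∀ u ∈ Icc (0:ℝ) 1, f u = 0 := by
  have hint : IntervalIntegrable f volume 0 1 := hf.intervalIntegrable 0 1
  have hae : f =ᵐ[volume.restrict (Ioc (0:ℝ) 1)] 0 := by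
    rw [← intervalIntegral.integral_eq_zero_iff_of_le_of_nonneg_ae (by norm_num)
      (Filter.Eventually.of_forall fun u => h0 u) hint]
    exact hz
  have hnull : volume ({u | f u ≠ 0} ∩ Ioc (0:ℝ) 1) = 0 := by
    have h1 : volume.restrict (Ioc (0:ℝ) 1) {u | ¬ f u = 0} = 0 := by
      have := ae_iff.1 hae
      simpa using this
    rwa [Measure.restrict_apply' measurableSet_Ioc] at h1
  have hIoo : ∀ u ∈ Ioo (0:ℝ) 1, f u = 0 := by
    intro u hu
    by_contra hne
    have hpos : 0 < f u := lt_of_le_of_ne (h0 u) (Ne.symm hne)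
    set U : Set ℝ := {v | 0 < f v} ∩ Ioo 0 1 with hU
    have hUopen : IsOpen U := (isOpen_lt continuous_const hf).inter isOpen_Ioo
    have hUne : U.Nonempty := ⟨u, hpos, hu⟩
    have hUsub : U ⊆ {v | f v ≠ 0} ∩ Ioc (0:ℝ) 1 :=
      fun v hv => ⟨ne_of_gt hv.1, Ioo_subset_Ioc_self hv.2⟩
    have : volume U = 0 := measure_mono_null hUsub hnull
    exact absurd this (hUopen.measure_pos volume hUne).ne'
  have hcl : EqOn f 0 (closure (Ioo (0:ℝ) 1)) :=
    (Set.EqOn.closure (fun u hu => hIoo u hu) hf continuous_const)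
  intro u hu
  have : u ∈ closure (Ioo (0:ℝ) 1) := by
    rwa [closure_Ioo (by norm_num : (0:ℝ) ≠ 1)]
  exact hcl this

set_option maxHeartbeats 2000000 in
/-- Under the area-preserving mean-curvature flow, the length satisfies
`dL/dt = -∫₀¹ κ² |∂ᵤX| du + (1/L) (∫₀¹ κ |∂ᵤX| du)² ≤ 0`, so `L` is non-increasing,
with equality `dL/dt = 0` iff the curvature is constant in `u`. -/
theorem length_decreases_under_conserved_mcf (T : ℝ) (X : ℝ → ℝ → E2)
    (hX : IsSmoothClosedFamily T X)
    (hflow : ∀ t ∈ Ico (0:ℝ) T, ∀ u : ℝ,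
      ⟪derivWithin (fun s => X s u) (Ico 0 T) t, unitNormal (X t) u⟫ =
        -curvature (X t) u +
          (curveLength (X t))⁻¹ * ∫ w in (0:ℝ)..1, curvature (X t) w * ‖deriv (X t) w‖) :
    (∀ t ∈ Ico (0:ℝ) T,
      HasDerivWithinAt (fun s => curveLength (X s))
        (-(∫ u in (0:ℝ)..1, (curvature (X t) u)^2 * ‖deriv (X t) u‖) +
          (curveLength (X t))⁻¹ * (∫ u in (0:ℝ)..1, curvature (X t) u * ‖deriv (X t) u‖)^2)
        (Ico 0 T) t ∧
      (-(∫ u in (0:ℝ)..1, (curvature (X t) u)^2 * ‖deriv (X t) u‖) +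
          (curveLength (X t))⁻¹ * (∫ u in (0:ℝ)..1, curvature (X t) u * ‖deriv (X t) u‖)^2 ≤ 0) ∧
      ((-(∫ u in (0:ℝ)..1, (curvature (X t) u)^2 * ‖deriv (X t) u‖) +
          (curveLength (X t))⁻¹ * (∫ u in (0:ℝ)..1, curvature (X t) u * ‖deriv (X t) u‖)^2 = 0) ↔
        ∃ c : ℝ, ∀ u : ℝ, curvature (X t) u = c)) ∧
    AntitoneOn (fun t => curveLength (X t)) (Ico 0 T) := by
  rcases lt_or_ge 0 T with hT | hT
  swap
  · have hempty : Ico (0:ℝ) T = ∅ := Ico_eq_empty (not_lt.2 hT)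
    constructor
    · intro t ht; rw [hempty] at ht; exact absurd ht (notMem_empty t)
    · intro a ha; rw [hempty] at ha; exact absurd ha (notMem_empty a)
  obtain ⟨hFc, hcurve⟩ := hX
  set S : Set (ℝ × ℝ) := Ico 0 T ×ˢ (univ : Set ℝ) with hSdef
  set F : ℝ × ℝ → E2 := fun p => X p.1 p.2 with hFdef
  set f' : ℝ × ℝ → (ℝ × ℝ) →L[ℝ] E2 := fderivWithin ℝ F S with hf'def
  set f'' : ℝ × ℝ → (ℝ × ℝ) →L[ℝ] (ℝ × ℝ) →L[ℝ] E2 := fderivWithin ℝ f' S with hf''def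
  have hSconv : Convex ℝ S := (convex_Ico 0 T).prod convex_univ
  have hSint : (interior S).Nonempty := by
    rw [hSdef, interior_prod_eq, interior_Ico, interior_univ]
    exact (nonempty_Ioo.2 hT).prod univ_nonempty
  have hSuniq : UniqueDiffOn ℝ S := uniqueDiffOn_convex hSconv hSint
  have hf'd : ∀ p ∈ S, HasFDerivWithinAt F (f' p) S p := fun p hp =>
    (hFc.differentiableOn (by norm_num) p hp).hasFDerivWithinAt
  have hf'cd : ContDiffOn ℝ 1 f' S := hFc.fderivWithin hSuniq (by norm_num)
  have hf''d : ∀ p ∈ S, HasFDerivWithinAt f' (f'' p) S p := fun p hp =>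
    (hf'cd.differentiableOn one_ne_zero p hp).hasFDerivWithinAt
  have hf''c : ContinuousOn f'' S := hf'cd.continuousOn_fderivWithin hSuniq le_rfl
  have hsymm : ∀ p ∈ S, ∀ v w : ℝ × ℝ, f'' p v w = f'' p w v := by
    intro p hp v w
    refine hSconv.second_derivative_within_at_symmetric (f := F) (f' := f') hSint ?_ hp ?_ v w
    · intro x hx
      exact (hf'd x (interior_subset hx)).hasFDerivAt (mem_interior_iff_mem_nhds.mp hx)
    · exact (hf''d p hp).mono interior_subset
  have hmem : ∀ s ∈ Ico (0:ℝ) T, ∀ u : ℝ, ((s, u) : ℝ × ℝ) ∈ S := fun s hs u => ⟨hs, trivial⟩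
  have hXderiv : ∀ s ∈ Ico (0:ℝ) T, ∀ u : ℝ,
      HasDerivAt (X s) (f' (s, u) ((0:ℝ), (1:ℝ))) u := by
    intro s hs u
    have hι : HasDerivAt (fun v : ℝ => ((s, v) : ℝ × ℝ)) (((0:ℝ), (1:ℝ))) u :=
      HasDerivAt.prodMk (hasDerivAt_const u s) (hasDerivAt_id u)
    have h := (hf'd (s, u) (hmem s hs u)).comp_hasDerivWithinAt (s := univ) u
      hι.hasDerivWithinAt (fun v _ => hmem s hs v)
    rw [hasDerivWithinAt_univ] at h
    exact h
  have hderiv_eq : ∀ s ∈ Ico (0:ℝ) T, ∀ u : ℝ,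
      deriv (X s) u = f' (s, u) ((0:ℝ), (1:ℝ)) := fun s hs u => (hXderiv s hs u).deriv
  have hgne : ∀ s ∈ Ico (0:ℝ) T, ∀ u : ℝ, f' (s, u) ((0:ℝ), (1:ℝ)) ≠ 0 := fun s hs u => by
    rw [← hderiv_eq s hs u]; exact (hcurve s hs).2.2 u
  have hVd : ∀ s ∈ Ico (0:ℝ) T, ∀ u : ℝ,
      HasDerivWithinAt (fun σ => X σ u) (f' (s, u) ((1:ℝ), (0:ℝ))) (Ico 0 T) s := by
    intro s hs u
    have hι : HasDerivWithinAt (fun σ : ℝ => ((σ, u) : ℝ × ℝ)) (((1:ℝ), (0:ℝ))) (Ico 0 T) s :=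
      (HasDerivAt.prodMk (hasDerivAt_id s) (hasDerivAt_const s u)).hasDerivWithinAt
    exact (hf'd (s, u) (hmem s hs u)).comp_hasDerivWithinAt s hι (fun σ hσ => hmem σ hσ u)
  have hf'u : ∀ s ∈ Ico (0:ℝ) T, ∀ u : ℝ,
      HasDerivAt (fun v : ℝ => f' (s, v)) (f'' (s, u) ((0:ℝ), (1:ℝ))) u := by
    intro s hs u
    have hι : HasDerivAt (fun v : ℝ => ((s, v) : ℝ × ℝ)) (((0:ℝ), (1:ℝ))) u :=
      HasDerivAt.prodMk (hasDerivAt_const u s) (hasDerivAt_id u)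
    have h := (hf''d (s, u) (hmem s hs u)).comp_hasDerivWithinAt (s := univ) u
      hι.hasDerivWithinAt (fun v _ => hmem s hs v)
    rw [hasDerivWithinAt_univ] at h
    exact h
  have hf't : ∀ s ∈ Ico (0:ℝ) T, ∀ u : ℝ,
      HasDerivWithinAt (fun σ : ℝ => f' (σ, u)) (f'' (s, u) ((1:ℝ), (0:ℝ))) (Ico 0 T) s := by
    intro s hs u
    have hι : HasDerivWithinAt (fun σ : ℝ => ((σ, u) : ℝ × ℝ)) (((1:ℝ), (0:ℝ))) (Ico 0 T) s :=
      (HasDerivAt.prodMk (hasDerivAt_id s) (hasDerivAt_const s u)).hasDerivWithinAt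
    exact (hf''d (s, u) (hmem s hs u)).comp_hasDerivWithinAt s hι (fun σ hσ => hmem σ hσ u)
  have hφd : ∀ s ∈ Ico (0:ℝ) T, ∀ u : ℝ,
      HasDerivWithinAt (fun σ : ℝ => f' (σ, u) ((0:ℝ), (1:ℝ)))
        (f'' (s, u) ((1:ℝ), (0:ℝ)) ((0:ℝ), (1:ℝ))) (Ico 0 T) s := by
    intro s hs u
    have h := (hf't s hs u).clm_apply
      (hasDerivWithinAt_const s (Ico (0:ℝ) T) (((0:ℝ), (1:ℝ)) : ℝ × ℝ))
    simpa using h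
  -- continuity of slices of f' and f''
  have hf'slc : ∀ s ∈ Ico (0:ℝ) T, Continuous (fun u : ℝ => f' (s, u)) := by
    intro s hs
    rw [← continuousOn_univ]
    exact hf'cd.continuousOn.comp (by fun_prop) (fun u _ => hmem s hs u)
  have hf''slc : ∀ s ∈ Ico (0:ℝ) T, Continuous (fun u : ℝ => f'' (s, u)) := by
    intro s hs
    rw [← continuousOn_univ]
    exact hf''c.comp (by fun_prop) (fun u _ => hmem s hs u)
  -- the ψ function and its continuity on S
  set ψ : ℝ → ℝ → ℝ := fun s u =>
    ⟪f'' (s, u) ((1:ℝ), (0:ℝ)) ((0:ℝ), (1:ℝ)), f' (s, u) ((0:ℝ), (1:ℝ))⟫ /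
      ‖f' (s, u) ((0:ℝ), (1:ℝ))‖ with hψdef
  have happly2 : Continuous (fun A : (ℝ × ℝ) →L[ℝ] (ℝ × ℝ) →L[ℝ] E2 =>
      A ((1:ℝ), (0:ℝ)) ((0:ℝ), (1:ℝ))) :=
    (ContinuousLinearMap.apply ℝ E2 (((0:ℝ), (1:ℝ)) : ℝ × ℝ)).continuous.comp
      (ContinuousLinearMap.apply ℝ ((ℝ × ℝ) →L[ℝ] E2) (((1:ℝ), (0:ℝ)) : ℝ × ℝ)).continuous
  have happly1 : Continuous (fun A : (ℝ × ℝ) →L[ℝ] E2 => A ((0:ℝ), (1:ℝ))) :=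
    (ContinuousLinearMap.apply ℝ E2 (((0:ℝ), (1:ℝ)) : ℝ × ℝ)).continuous
  have hψS : ContinuousOn (fun p : ℝ × ℝ => ψ p.1 p.2) S := by
    apply ContinuousOn.div
    · exact ContinuousOn.inner (happly2.comp_continuousOn hf''c)
        (happly1.comp_continuousOn hf'cd.continuousOn)
    · exact (happly1.comp_continuousOn hf'cd.continuousOn).norm
    · intro p hp
      have := hgne p.1 hp.1 p.2
      simpa using norm_ne_zero_iff.2 this
  -- main pointwise claim
  have main : ∀ t ∈ Ico (0:ℝ) T,
      HasDerivWithinAt (fun s => curveLength (X s))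
        (-(∫ u in (0:ℝ)..1, (curvature (X t) u)^2 * ‖deriv (X t) u‖) +
          (curveLength (X t))⁻¹ *
            (∫ u in (0:ℝ)..1, curvature (X t) u * ‖deriv (X t) u‖)^2)
        (Ico 0 T) t ∧
      (-(∫ u in (0:ℝ)..1, (curvature (X t) u)^2 * ‖deriv (X t) u‖) +
          (curveLength (X t))⁻¹ *
            (∫ u in (0:ℝ)..1, curvature (X t) u * ‖deriv (X t) u‖)^2 ≤ 0) ∧
      ((-(∫ u in (0:ℝ)..1, (curvature (X t) u)^2 * ‖deriv (X t) u‖) +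
          (curveLength (X t))⁻¹ *
            (∫ u in (0:ℝ)..1, curvature (X t) u * ‖deriv (X t) u‖)^2 = 0) ↔
        ∃ c : ℝ, ∀ u : ℝ, curvature (X t) u = c) := by
    intro t ht
    obtain ⟨hYc, hYper, hY0⟩ := hcurve t ht
    set g : ℝ → E2 := deriv (X t) with hgdef
    set κ : ℝ → ℝ := curvature (X t) with hκdef
    set τ : ℝ → E2 := fun u => ‖g u‖⁻¹ • g u with hτdef
    have hτ_app : ∀ u, τ u = ‖g u‖⁻¹ • g u := fun u => rfl
    have hgne0 : ∀ u, ‖g u‖ ≠ 0 := fun u => norm_ne_zero_iff.2 (hY0 u)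
    have hY2 : ContDiff ℝ ((1 : WithTop ℕ∞) + 1) (X t) :=
      hYc.of_le (by norm_num)
    have hgc : ContDiff ℝ 1 g := (contDiff_succ_iff_deriv.1 hY2).2.2
    have hgcont : Continuous g := hgc.continuous
    have hgper : ∀ u, g (u + 1) = g u := by
      intro u
      have h1 : (fun v : ℝ => X t (v + 1)) = X t := funext hYper
      have h2 : deriv (fun v : ℝ => X t (v + 1)) u = deriv (X t) (u + 1) :=
        deriv_comp_add_const _ _ _
      rw [hgdef, ← h2, h1]
    have hτc : ContDiff ℝ 1 τ := ((hgc.norm ℝ hY0).inv hgne0).smul hgc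
    have hτcont : Continuous τ := hτc.continuous
    have hτ'cont : Continuous (deriv τ) := hτc.continuous_deriv le_rfl
    have hτd : ∀ u, HasDerivAt τ (deriv τ u) u := fun u =>
      (hτc.differentiable one_ne_zero u).hasDerivAt
    have hτper : ∀ u, τ (u + 1) = τ u := fun u => by
      rw [hτ_app, hτ_app, hgper]
    have hτ'per : ∀ u, deriv τ (u + 1) = deriv τ u := fun u => by
      have h1 : (fun v : ℝ => τ (v + 1)) = τ := funext hτper
      have h2 : deriv (fun v : ℝ => τ (v + 1)) u = deriv τ (u + 1) := deriv_comp_add_const _ _ _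
      rw [← h2, h1]
    have hκ_eq : ∀ u, κ u = -(‖g u‖⁻¹ * ⟪deriv τ u, unitNormal (X t) u⟫) := fun u => rfl
    have hn_eq : ∀ u, unitNormal (X t) u = ‖g u‖⁻¹ • perp (g u) := fun u => rfl
    have hκc : Continuous κ := by
      have he : κ = fun u => -(‖g u‖⁻¹ * ⟪deriv τ u, ‖g u‖⁻¹ • perp (g u)⟫) := funext fun u => by
        rw [hκ_eq u, hn_eq u]
      rw [he]
      exact ((hgcont.norm.inv₀ hgne0).mul
        (hτ'cont.inner ((hgcont.norm.inv₀ hgne0).smul (continuous_perp.comp hgcont)))).neg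
    have hκper : ∀ u, κ (u + 1) = κ u := fun u => by
      rw [hκ_eq, hκ_eq, hn_eq, hn_eq, hτ'per, hgper]
    -- the time interval J
    set b : ℝ := (t + T) / 2 with hbdef
    have htb : t < b := by rw [hbdef]; linarith [ht.2]
    have hbT : b < T := by rw [hbdef]; linarith [ht.2]
    set J : Set ℝ := Icc 0 b with hJdef
    have hJsub : J ⊆ Ico 0 T := fun x hx => ⟨hx.1, lt_of_le_of_lt hx.2 hbT⟩
    have htJ : t ∈ J := ⟨ht.1, htb.le⟩
    have hJconv : Convex ℝ J := convex_Icc 0 b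
    have hd : ∀ s ∈ J, ∀ u ∈ Icc (0:ℝ) 1,
        HasDerivWithinAt (fun σ => ‖f' (σ, u) ((0:ℝ), (1:ℝ))‖) (ψ s u) J s := by
      intro s hs u _
      have hsI : s ∈ Ico (0:ℝ) T := hJsub hs
      exact hasDerivWithinAt_norm_comp ((hφd s hsI u).mono hJsub) (hgne s hsI u)
    have hui : ∀ ε > 0, ∃ δ > 0, ∀ s ∈ J, |s - t| ≤ δ →
        ∀ u ∈ Icc (0:ℝ) 1, |ψ s u - ψ t u| ≤ ε := by
      have hKc : IsCompact (J ×ˢ Icc (0:ℝ) 1) := isCompact_Icc.prod isCompact_Icc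
      have hKsub : J ×ˢ Icc (0:ℝ) 1 ⊆ S := fun p hp => ⟨hJsub hp.1, trivial⟩
      have hucont := hKc.uniformContinuousOn_of_continuous (hψS.mono hKsub)
      rw [Metric.uniformContinuousOn_iff_le] at hucont
      intro ε hε
      obtain ⟨δ, hδ, h⟩ := hucont ε hε
      refine ⟨δ, hδ, fun s hs hst u hu => ?_⟩
      have hd1 : dist ((s, u) : ℝ × ℝ) ((t, u) : ℝ × ℝ) ≤ δ := by
        rw [Prod.dist_eq]
        refine max_le ?_ ?_ <;> simp [Real.dist_eq, hst, hδ.le]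
      have h2 := h (s, u) ⟨hs, hu⟩ (t, u) ⟨htJ, hu⟩ hd1
      simpa [Real.dist_eq] using h2
    have hφint : ∀ s ∈ J, IntervalIntegrable (fun u => ‖f' (s, u) ((0:ℝ), (1:ℝ))‖) volume 0 1 := by
      intro s hs
      exact ((happly1.comp (hf'slc s (hJsub hs))).norm).intervalIntegrable 0 1
    have hψtc : Continuous (ψ t) := by
      have h1 : Continuous (fun u : ℝ => f'' (t, u)) := hf''slc t ht
      have h2 : Continuous (fun u : ℝ => f' (t, u)) := hf'slc t ht
      exact ((happly2.comp h1).inner (happly1.comp h2)).div ((happly1.comp h2).norm)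
        (fun u => by simpa using norm_ne_zero_iff.2 (hgne t ht u))
    have hkey := hasDerivWithinAt_intervalIntegral hJconv htJ hd hui hφint
      (hψtc.intervalIntegrable 0 1)
    have hLen : ∀ s ∈ J, curveLength (X s) = ∫ u in (0:ℝ)..1, ‖f' (s, u) ((0:ℝ), (1:ℝ))‖ := by
      intro s hs
      exact intervalIntegral.integral_congr fun u _ => by rw [hderiv_eq s (hJsub hs) u]
    have hkey2 : HasDerivWithinAt (fun s => curveLength (X s)) (∫ u in (0:ℝ)..1, ψ t u) J t :=
      hkey.congr hLen (hLen t htJ)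
    have hJnhds : J ∈ 𝓝[Ico (0:ℝ) T] t := by
      have h1 : Ico (0:ℝ) T ∩ Iic b ⊆ J := fun x hx => ⟨hx.1.1, hx.2⟩
      exact Filter.mem_of_superset
        (Filter.inter_mem self_mem_nhdsWithin (mem_nhdsWithin_of_mem_nhds (Iic_mem_nhds htb))) h1
    have hkey3 : HasDerivWithinAt (fun s => curveLength (X s)) (∫ u in (0:ℝ)..1, ψ t u)
        (Ico 0 T) t := hkey2.mono_of_mem_nhdsWithin hJnhds
    -- value computation
    set V : ℝ → E2 := fun u => derivWithin (fun σ => X σ u) (Ico 0 T) t with hVdef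
    set W : ℝ → E2 := fun u => f'' (t, u) ((1:ℝ), (0:ℝ)) ((0:ℝ), (1:ℝ)) with hWdef
    have hgu : ∀ u, g u = f' (t, u) ((0:ℝ), (1:ℝ)) := fun u => hderiv_eq t ht u
    have hψτ : ∀ u, ψ t u = ⟪W u, τ u⟫ := by
      intro u
      show ⟪W u, f' (t, u) ((0:ℝ), (1:ℝ))⟫ / ‖f' (t, u) ((0:ℝ), (1:ℝ))‖ = ⟪W u, τ u⟫
      rw [← hgu u, hτ_app u, real_inner_smul_right, div_eq_inv_mul]
    have hVf : V = fun u => f' (t, u) ((1:ℝ), (0:ℝ)) :=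
      funext fun u => (hVd t ht u).derivWithin (uniqueDiffOn_Ico 0 T t ht)
    have hVW : ∀ u, HasDerivAt V (W u) u := by
      intro u
      rw [hVf]
      have h := (hf'u t ht u).clm_apply (hasDerivAt_const u (((1:ℝ), (0:ℝ)) : ℝ × ℝ))
      have hsy := hsymm (t, u) (hmem t ht u) ((0:ℝ), (1:ℝ)) ((1:ℝ), (0:ℝ))
      simpa [hWdef, hsy] using h
    have hVcont : Continuous V := by
      rw [hVf]
      exact (ContinuousLinearMap.apply ℝ E2 (((1:ℝ), (0:ℝ)) : ℝ × ℝ)).continuous.comp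
        (hf'slc t ht)
    have hWcont : Continuous W := happly2.comp (hf''slc t ht)
    have hVper : ∀ u, V (u + 1) = V u := by
      intro u
      show derivWithin (fun σ => X σ (u + 1)) (Ico 0 T) t
          = derivWithin (fun σ => X σ u) (Ico 0 T) t
      exact derivWithin_congr (fun σ hσ => (hcurve σ hσ).2.1 u) ((hcurve t ht).2.1 u)
    have hIBP : (∫ u in (0:ℝ)..1, (⟪V u, deriv τ u⟫ + ⟪W u, τ u⟫)) =
        ⟪V 1, τ 1⟫ - ⟪V 0, τ 0⟫ := by
      apply intervalIntegral.integral_eq_sub_of_hasDerivAt (f := fun u => ⟪V u, τ u⟫)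
        (f' := fun u => ⟪V u, deriv τ u⟫ + ⟪W u, τ u⟫)
      · intro u _
        exact (hVW u).inner ℝ (hτd u)
      · exact ((hVcont.inner hτ'cont).add (hWcont.inner hτcont)).intervalIntegrable 0 1
    have hIBP0 : (∫ u in (0:ℝ)..1, (⟪V u, deriv τ u⟫ + ⟪W u, τ u⟫)) = 0 := by
      rw [hIBP]
      have h1 : V 1 = V 0 := by have := hVper 0; rwa [zero_add] at this
      have h2 : τ 1 = τ 0 := by have := hτper 0; rwa [zero_add] at this
      rw [h1, h2, sub_self]
    have hint1 : IntervalIntegrable (fun u => ⟪V u, deriv τ u⟫) volume 0 1 :=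
      (hVcont.inner hτ'cont).intervalIntegrable 0 1
    have hint2 : IntervalIntegrable (fun u => ⟪W u, τ u⟫) volume 0 1 :=
      (hWcont.inner hτcont).intervalIntegrable 0 1
    have hWτint : (∫ u in (0:ℝ)..1, ⟪W u, τ u⟫) = -∫ u in (0:ℝ)..1, ⟪V u, deriv τ u⟫ := by
      have hadd := intervalIntegral.integral_add hint1 hint2
      rw [hIBP0] at hadd
      linarith
    have hττ' : ∀ u, ⟪deriv τ u, τ u⟫ = 0 := by
      intro u
      have hone : ∀ v, ⟪τ v, τ v⟫ = (1:ℝ) := fun v => by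
        rw [real_inner_self_eq_norm_sq, hτ_app, norm_smul, norm_inv, norm_norm,
          inv_mul_cancel₀ (hgne0 v), one_pow]
      have hdq : HasDerivAt (fun v => ⟪τ v, τ v⟫) (⟪τ u, deriv τ u⟫ + ⟪deriv τ u, τ u⟫) u :=
        (hτd u).inner ℝ (hτd u)
      have hconst : HasDerivAt (fun v => ⟪τ v, τ v⟫) 0 u := by
        have he : (fun v => ⟪τ v, τ v⟫) = fun _ => (1:ℝ) := funext hone
        rw [he]; exact hasDerivAt_const u 1
      have h0 := hdq.unique hconst
      rw [real_inner_comm (τ u) (deriv τ u)] at h0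
      rw [real_inner_comm]
      linarith
    have hτ'g : ∀ u, ⟪deriv τ u, g u⟫ = 0 := by
      intro u
      have h1 := hττ' u
      rw [hτ_app u, real_inner_smul_right] at h1
      exact (mul_eq_zero.1 h1).resolve_left (inv_ne_zero (hgne0 u))
    have hne2 : ∀ u, ⟪deriv τ u, unitNormal (X t) u⟫ = -(κ u * ‖g u‖) := by
      intro u
      have h5 : κ u = -(‖g u‖⁻¹ * ⟪deriv τ u, unitNormal (X t) u⟫) := hκ_eq u
      set A : ℝ := ⟪deriv τ u, unitNormal (X t) u⟫ with hA
      rw [h5]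
      field_simp
      rw [mul_div_assoc, div_self (hgne0 u), mul_one]
    have hVτ'_pt : ∀ u, ⟪V u, deriv τ u⟫ =
        κ u ^ 2 * ‖g u‖ -
          ((curveLength (X t))⁻¹ * (∫ w in (0:ℝ)..1, κ w * ‖g w‖)) * (κ u * ‖g u‖) := by
      intro u
      have hdec : deriv τ u = (‖g u‖⁻¹ * ⟪deriv τ u, perp (g u)⟫) • (‖g u‖⁻¹ • perp (g u)) :=
        orth_decomp (hY0 u) (hτ'g u)
      have hcoef : ‖g u‖⁻¹ * ⟪deriv τ u, perp (g u)⟫ = ⟪deriv τ u, unitNormal (X t) u⟫ := by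
        rw [hn_eq u, real_inner_smul_right]
      have hVn : ⟪V u, ‖g u‖⁻¹ • perp (g u)⟫ =
          -κ u + (curveLength (X t))⁻¹ * ∫ w in (0:ℝ)..1, κ w * ‖g w‖ := by
        rw [← hn_eq u]
        exact hflow t ht u
      rw [hdec, real_inner_smul_right, hVn, hcoef, hne2 u]
      ring
    have hκgint : IntervalIntegrable (fun u => κ u * ‖g u‖) volume 0 1 :=
      (hκc.mul hgcont.norm).intervalIntegrable 0 1
    have hκ2gint : IntervalIntegrable (fun u => κ u ^ 2 * ‖g u‖) volume 0 1 :=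
      ((hκc.pow 2).mul hgcont.norm).intervalIntegrable 0 1
    have hval : (∫ u in (0:ℝ)..1, ψ t u) =
        -(∫ u in (0:ℝ)..1, κ u ^ 2 * ‖g u‖) +
          (curveLength (X t))⁻¹ * (∫ u in (0:ℝ)..1, κ u * ‖g u‖) ^ 2 := by
      have e1 : (∫ u in (0:ℝ)..1, ψ t u) = ∫ u in (0:ℝ)..1, ⟪W u, τ u⟫ :=
        intervalIntegral.integral_congr fun u _ => hψτ u
      have e2 : (∫ u in (0:ℝ)..1, ⟪V u, deriv τ u⟫) =
          ∫ u in (0:ℝ)..1, (κ u ^ 2 * ‖g u‖ -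
            ((curveLength (X t))⁻¹ * (∫ w in (0:ℝ)..1, κ w * ‖g w‖)) * (κ u * ‖g u‖)) :=
        intervalIntegral.integral_congr fun u _ => hVτ'_pt u
      rw [e1, hWτint, e2, intervalIntegral.integral_sub hκ2gint (hκgint.const_mul _),
        intervalIntegral.integral_const_mul]
      ring
    -- the quadratic expansion for the inequality and the equality case
    have hLint : curveLength (X t) = ∫ u in (0:ℝ)..1, ‖g u‖ := rfl
    have hLpos : 0 < curveLength (X t) := by
      rw [hLint]
      exact intervalIntegral.intervalIntegral_pos_of_pos_on
        (hgcont.norm.intervalIntegrable 0 1) (fun x _ => norm_pos_iff.2 (hY0 x)) (by norm_num)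
    have hLne : curveLength (X t) ≠ 0 := hLpos.ne'
    set K2 : ℝ := ∫ u in (0:ℝ)..1, κ u ^ 2 * ‖g u‖ with hK2def
    set C1 : ℝ := ∫ u in (0:ℝ)..1, κ u * ‖g u‖ with hC1def
    set L : ℝ := curveLength (X t) with hLdef
    set c0 : ℝ := C1 / L with hc0def
    have hgint : IntervalIntegrable (fun u => ‖g u‖) volume 0 1 :=
      hgcont.norm.intervalIntegrable 0 1
    have hQ : (∫ u in (0:ℝ)..1, (κ u - c0) ^ 2 * ‖g u‖) = K2 - 2 * c0 * C1 + c0 ^ 2 * L := by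
      have e : ∀ u : ℝ, (κ u - c0) ^ 2 * ‖g u‖ =
          κ u ^ 2 * ‖g u‖ - 2 * c0 * (κ u * ‖g u‖) + c0 ^ 2 * ‖g u‖ := fun u => by ring
      rw [intervalIntegral.integral_congr (fun u _ => e u),
        intervalIntegral.integral_add (hκ2gint.sub (hκgint.const_mul _))
          (hgint.const_mul _),
        intervalIntegral.integral_sub hκ2gint (hκgint.const_mul _),
        intervalIntegral.integral_const_mul, intervalIntegral.integral_const_mul,
        ← hK2def, ← hC1def, ← hLint]
    have hQnn : 0 ≤ ∫ u in (0:ℝ)..1, (κ u - c0) ^ 2 * ‖g u‖ :=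
      intervalIntegral.integral_nonneg (by norm_num) (fun u _ => by positivity)
    clear_value K2 C1 L c0
    have hidentity : -K2 + L⁻¹ * C1 ^ 2 = -(K2 - 2 * c0 * C1 + c0 ^ 2 * L) := by
      rw [hc0def]
      field_simp
      ring
    refine ⟨hval ▸ hkey3, ?_, ?_⟩
    · linarith [hQnn, hQ, hidentity]
    · constructor
      · intro h0
        have hQ0 : (∫ u in (0:ℝ)..1, (κ u - c0) ^ 2 * ‖g u‖) = 0 := by
          rw [hQ]; linarith [hidentity, h0]
        have hzero := eqOn_zero_of_integral_zero
          (((hκc.sub continuous_const).pow 2).mul hgcont.norm)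
          (fun u => by show 0 ≤ (κ u - c0) ^ 2 * ‖g u‖; positivity) hQ0
        refine ⟨c0, fun u => ?_⟩
        have hper : Function.Periodic κ 1 := hκper
        obtain ⟨v, hv, hvu⟩ := hper.exists_mem_Ico₀ (by norm_num) u
        have hzv := hzero v (Ico_subset_Icc_self hv)
        have h3 : (κ v - c0) ^ 2 = 0 :=
          (mul_eq_zero.1 hzv).resolve_right (hgne0 v)
        have h4 : κ v = c0 := by
          have h6 : κ v - c0 = 0 := by
            have := (pow_eq_zero_iff (two_ne_zero (α := ℕ))).1 h3
            exact this
          linarith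
        rw [hvu, h4]
      · rintro ⟨c, hc⟩
        have hC1e : C1 = c * L := by
          rw [hC1def]
          calc (∫ u in (0:ℝ)..1, κ u * ‖g u‖) = ∫ u in (0:ℝ)..1, c * ‖g u‖ :=
                intervalIntegral.integral_congr fun u _ => by rw [hc u]
            _ = c * ∫ u in (0:ℝ)..1, ‖g u‖ := intervalIntegral.integral_const_mul _ _
            _ = c * L := by rw [hLint]
        have hK2e : K2 = c ^ 2 * L := by
          rw [hK2def]
          calc (∫ u in (0:ℝ)..1, κ u ^ 2 * ‖g u‖) = ∫ u in (0:ℝ)..1, c ^ 2 * ‖g u‖ :=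
                intervalIntegral.integral_congr fun u _ => by rw [hc u]
            _ = c ^ 2 * ∫ u in (0:ℝ)..1, ‖g u‖ := intervalIntegral.integral_const_mul _ _
            _ = c ^ 2 * L := by rw [hLint]
        rw [hK2e, hC1e]
        field_simp
        ring
  refine ⟨main, ?_⟩
  have hconv : Convex ℝ (Ico (0:ℝ) T) := convex_Ico 0 T
  refine antitoneOn_of_deriv_nonpos hconv
    (fun t ht => ((main t ht).1).continuousWithinAt) ?_ ?_
  · rw [interior_Ico]
    intro x hx
    exact (((main x (Ioo_subset_Ico_self hx)).1).hasDerivAt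
      (Ico_mem_nhds hx.1 hx.2)).differentiableAt.differentiableWithinAt
  · rw [interior_Ico]
    intro x hx
    have h1 := ((main x (Ioo_subset_Ico_self hx)).1).hasDerivAt (Ico_mem_nhds hx.1 hx.2)
    rw [h1.deriv]
    exact (main x (Ioo_subset_Ico_self hx)).2.1
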